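/- For any integer n ≥ 2, det[v_{|j−k|}(2,2)]_{1≤j,k≤n} = (−2)^n·F_{2n−4}, where F_m is the m-th Fibonacci number. -/

import Mathlib

def lucasU {R : Type*} [CommRing R] (x y : R) : ℕ → R
  | 0 => 0
  | 1 => 1
  | n + 2 => x * lucasU x y (n + 1) - y * lucasU x y n

def lucasV {R : Type*} [CommRing R] (x y : R) : ℕ → R
  | 0 => 2
  | 1 => x
  | n + 2 => x * lucasV x y (n + 1) - y * lucasV x y n

def w : ℕ → ℤ := lucasV (2 : ℤ) 2

lemma w0 : w 0 = 2 := rfl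
lemma w1 : w 1 = 2 := rfl
lemma wrec (m : ℕ) : w (m+2) = 2 * w (m+1) - 2 * w m := rfl

def e (j k : ℕ) : ℤ := w ((j : ℤ) - (k : ℤ)).natAbs

lemma eval (j k m : ℕ) (h : ((j : ℤ) - (k : ℤ)).natAbs = m) : e j k = w m := by
  rw [e, h]

def r (j k : ℕ) : ℤ := if 2 ≤ j then e j k - 2 * e (j-1) k + 2 * e (j-2) k else e j k
def G (j k : ℕ) : ℤ := if 2 ≤ k then r j k - 2 * r j (k-1) + 2 * r j (k-2) else r j k
def t (j k : ℕ) : ℤ :=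
  if j = k then (if j < 2 then 2 else -6) else if j+1 = k ∨ k+1 = j then 2 else 0

lemma killR (j k : ℕ) (h : k + 2 ≤ j) : e j k - 2 * e (j-1) k + 2 * e (j-2) k = 0 := by
  obtain ⟨m, rfl⟩ : ∃ m, j = k + m + 2 := ⟨j - k - 2, by omega⟩
  rw [eval _ _ (m+2) (by omega), eval _ _ (m+1) (by omega), eval _ _ m (by omega), wrec]
  ring

lemma killC (j k : ℕ) (h : j + 2 ≤ k) : e j k - 2 * e j (k-1) + 2 * e j (k-2) = 0 := by
  obtain ⟨m, rfl⟩ : ∃ m, k = j + m + 2 := ⟨k - j - 2, by omega⟩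
  rw [eval _ _ (m+2) (by omega), eval _ _ (m+1) (by omega), eval _ _ m (by omega), wrec]
  ring

lemma w2 : w 2 = 0 := by rw [wrec]; simp [w0, w1]
lemma w3 : w 3 = -4 := by rw [wrec]; rw [w2, w1]; ring
lemma w4 : w 4 = -8 := by rw [wrec]; rw [w3, w2]; ring

lemma ebash (j k : ℕ) : G j k = t j k := by
  rcases le_or_gt 2 j with hj | hj <;> rcases le_or_gt 2 k with hk | hk
  · -- j ≥ 2, k ≥ 2
    rw [G, if_pos hk, r, if_pos hj, r, if_pos hj, r, if_pos hj]
    rcases lt_trichotomy (j + 2) k with h | h | h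
    · -- k ≥ j + 3
      rw [t, if_neg (by omega), if_neg (by omega)]
      linear_combination killC j k (by omega) - 2 * killC (j-1) k (by omega)
        + 2 * killC (j-2) k (by omega)
    · -- k = j + 2
      rw [t, if_neg (by omega), if_neg (by omega)]
      rw [eval j k 2 (by omega), eval (j-1) k 3 (by omega), eval (j-2) k 4 (by omega),
        eval j (k-1) 1 (by omega), eval (j-1) (k-1) 2 (by omega), eval (j-2) (k-1) 3 (by omega),
        eval j (k-2) 0 (by omega), eval (j-1) (k-2) 1 (by omega), eval (j-2) (k-2) 2 (by omega)]
      rw [w0, w1, w2, w3, w4]; ring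
    · rcases lt_trichotomy (k + 2) j with h' | h' | h'
      · -- j ≥ k + 3
        rw [t, if_neg (by omega), if_neg (by omega)]
        linear_combination killR j k (by omega) - 2 * killR j (k-1) (by omega)
          + 2 * killR j (k-2) (by omega)
      · -- j = k + 2
        rw [t, if_neg (by omega), if_neg (by omega)]
        rw [eval j k 2 (by omega), eval (j-1) k 1 (by omega), eval (j-2) k 0 (by omega),
          eval j (k-1) 3 (by omega), eval (j-1) (k-1) 2 (by omega), eval (j-2) (k-1) 1 (by omega),
          eval j (k-2) 4 (by omega), eval (j-1) (k-2) 3 (by omega), eval (j-2) (k-2) 2 (by omega)]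
        rw [w0, w1, w2, w3, w4]; ring
      · -- |j - k| ≤ 1
        rcases lt_trichotomy j k with h1 | h1 | h1
        · -- k = j + 1
          rw [t, if_neg (by omega), if_pos (by omega)]
          rw [eval j k 1 (by omega), eval (j-1) k 2 (by omega), eval (j-2) k 3 (by omega),
            eval j (k-1) 0 (by omega), eval (j-1) (k-1) 1 (by omega), eval (j-2) (k-1) 2 (by omega),
            eval j (k-2) 1 (by omega), eval (j-1) (k-2) 0 (by omega), eval (j-2) (k-2) 1 (by omega)]
          rw [w0, w1, w2, w3]; ring
        · -- j = k
          rw [t, if_pos h1, if_neg (by omega)]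
          rw [eval j k 0 (by omega), eval (j-1) k 1 (by omega), eval (j-2) k 2 (by omega),
            eval j (k-1) 1 (by omega), eval (j-1) (k-1) 0 (by omega), eval (j-2) (k-1) 1 (by omega),
            eval j (k-2) 2 (by omega), eval (j-1) (k-2) 1 (by omega), eval (j-2) (k-2) 0 (by omega)]
          rw [w0, w1, w2]; ring
        · -- j = k + 1
          rw [t, if_neg (by omega), if_pos (by omega)]
          rw [eval j k 1 (by omega), eval (j-1) k 0 (by omega), eval (j-2) k 1 (by omega),
            eval j (k-1) 2 (by omega), eval (j-1) (k-1) 1 (by omega), eval (j-2) (k-1) 0 (by omega),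
            eval j (k-2) 3 (by omega), eval (j-1) (k-2) 2 (by omega), eval (j-2) (k-2) 1 (by omega)]
          rw [w0, w1, w2, w3]; ring
  · -- j ≥ 2, k < 2
    rw [G, if_neg (by omega), r, if_pos hj]
    rcases lt_trichotomy (k + 2) j with h | h | h
    · rw [t, if_neg (by omega), if_neg (by omega)]
      linear_combination killR j k (by omega)
    · rw [t, if_neg (by omega), if_neg (by omega)]
      linear_combination killR j k (by omega)
    · -- j = k + 1, so j = 2, k = 1
      rw [t, if_neg (by omega), if_pos (by omega)]
      rw [eval j k 1 (by omega), eval (j-1) k 0 (by omega), eval (j-2) k 1 (by omega)]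
      rw [w0, w1]; ring
  · -- j < 2, k ≥ 2
    rw [G, if_pos hk, r, if_neg (by omega), r, if_neg (by omega), r, if_neg (by omega)]
    rcases lt_trichotomy (j + 2) k with h | h | h
    · rw [t, if_neg (by omega), if_neg (by omega)]
      linear_combination killC j k (by omega)
    · rw [t, if_neg (by omega), if_neg (by omega)]
      linear_combination killC j k (by omega)
    · -- k = j + 1, so j = 1, k = 2
      rw [t, if_neg (by omega), if_pos (by omega)]
      rw [eval j k 1 (by omega), eval j (k-1) 0 (by omega), eval j (k-2) 1 (by omega)]
      rw [w0, w1]; ring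
  · -- j < 2, k < 2
    rw [G, if_neg (by omega), r, if_neg (by omega)]
    interval_cases j <;> interval_cases k <;> rw [t] <;> simp [e, w0, w1]


/-- continuant for tridiagonal with off-diagonal 2 -/
def cont (d : ℕ → ℤ) : ℕ → ℤ
  | 0 => 1
  | 1 => d 0
  | n + 2 => d 0 * cont (fun i => d (i + 1)) (n + 1) - 4 * cont (fun i => d (i + 2)) n

/-- tridiagonal matrix -/
def T (d : ℕ → ℤ) (n : ℕ) : Matrix (Fin n) (Fin n) ℤ :=
  Matrix.of fun j k => if (j : ℕ) = k then d j
    else if (j : ℕ) + 1 = k ∨ (k : ℕ) + 1 = j then 2 else 0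

theorem detT : ∀ (n : ℕ) (d : ℕ → ℤ), (T d n).det = cont d n := by
  intro n
  induction n using Nat.strong_induction_on with
  | _ n ih =>
    match n with
    | 0 => intro d; simp [T, cont, Matrix.det_fin_zero]
    | 1 => intro d; simp [T, cont, Matrix.det_fin_one]
    | n + 2 =>
      intro d
      rw [show ((n:ℕ)+2) = (n+1).succ from rfl, Matrix.det_succ_column_zero]
      rw [Fin.sum_univ_succ, Fin.sum_univ_succ]
      have hz : ∀ i : Fin n, (-1 : ℤ) ^ ((i.succ.succ : Fin (n+2)) : ℕ) *
          T d (n+2) i.succ.succ 0 *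
          ((T d (n+2)).submatrix i.succ.succ.succAbove Fin.succ).det = 0 := by
        intro i
        have : T d (n+2) i.succ.succ 0 = 0 := by
          simp [T, Fin.val_succ]
        rw [this]; ring
      rw [Finset.sum_congr rfl (fun i _ => hz i), Finset.sum_const, smul_zero, add_zero]
      have h00 : (T d (n+2)).submatrix (Fin.succAbove 0) Fin.succ = T (fun i => d (i+1)) (n+1) := by
        ext i j
        simp only [Matrix.submatrix_apply, Fin.succAbove_zero, T, Matrix.of_apply, Fin.val_succ]
        by_cases h1 : (i : ℕ) = j
        · simp [h1]
        · rw [if_neg (by omega), if_neg h1]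
          by_cases h2 : (i : ℕ) + 1 = j ∨ (j : ℕ) + 1 = i
          · rw [if_pos (by omega), if_pos h2]
          · rw [if_neg (by omega), if_neg h2]
      have hs1 : ((0 : Fin (n+1)).succ) = (1 : Fin (n+2)) := rfl
      have h10 : T d (n+2) (0 : Fin (n+1)).succ 0 = 2 := by
        simp [T]
      -- the (1,0) minor
      have hA'det : ((T d (n+2)).submatrix ((0 : Fin (n+1)).succ).succAbove Fin.succ).det
          = 2 * (T (fun i => d (i+2)) n).det := by
        set A' := (T d (n+2)).submatrix ((0 : Fin (n+1)).succ).succAbove Fin.succ with hA'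
        rw [show A'.det = _ from Matrix.det_succ_row_zero A', Fin.sum_univ_succ]
        have hz2 : ∀ j : Fin n, (-1 : ℤ) ^ ((j.succ : Fin (n+1)) : ℕ) * A' 0 j.succ *
            (A'.submatrix Fin.succ j.succ.succAbove).det = 0 := by
          intro j
          have : A' 0 j.succ = 0 := by
            have h0 : ((0 : Fin (n+1)).succ).succAbove (0 : Fin (n+1)) = 0 := by
              apply Fin.succAbove_of_castSucc_lt
              simp [Fin.lt_def]
            simp only [hA', Matrix.submatrix_apply, h0, T, Matrix.of_apply, Fin.val_succ,
              Fin.val_zero]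
            simp
          rw [this]; ring
        rw [Finset.sum_congr rfl (fun j _ => hz2 j), Finset.sum_const, smul_zero, add_zero]
        have hA00 : A' 0 0 = 2 := by
          have h0 : ((0 : Fin (n+1)).succ).succAbove (0 : Fin (n+1)) = 0 := by
            apply Fin.succAbove_of_castSucc_lt
            simp [Fin.lt_def]
          simp only [hA', Matrix.submatrix_apply, h0, T, Matrix.of_apply]
          simp
        have hsub : A'.submatrix Fin.succ (Fin.succAbove 0) = T (fun i => d (i+2)) n := by
          ext i j
          have hsa : ((0 : Fin (n+1)).succ).succAbove i.succ = i.succ.succ := by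
            rw [Fin.succAbove_of_le_castSucc]
            simp [Fin.le_def]
          simp only [Matrix.submatrix_apply, Fin.succAbove_zero, hA', hsa, T, Matrix.of_apply,
            Fin.val_succ]
          by_cases h1 : (i : ℕ) = j
          · simp [h1]
          · rw [if_neg (by omega), if_neg h1]
            by_cases h2 : (i : ℕ) + 1 = j ∨ (j : ℕ) + 1 = i
            · rw [if_pos (by omega), if_pos h2]
            · rw [if_neg (by omega), if_neg h2]
        rw [hA00, hsub]
        simp
      have hd00 : T d (n+2) (0 : Fin (n+2)) 0 = d 0 := by simp [T]
      rw [h00, hA'det, hd00, h10, ih (n+1) (by omega) _, ih n (by omega) _]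
      simp only [Fin.val_zero, pow_zero, one_mul, Fin.val_succ, pow_succ, add_zero]
      show d 0 * cont (fun i => d (i+1)) (n+1) +
        (-1:ℤ)^(((0:Fin (n+1)):ℕ)) * -1 * 2 * (2 * cont (fun i => d (i+2)) n) = cont d (n+2)
      simp only [Fin.val_zero, pow_zero, cont]
      ring

lemma cont_const : ∀ n : ℕ, cont (fun _ => (-6 : ℤ)) n = (-2)^n * (Nat.fib (2*n+2) : ℤ) := by
  intro n
  induction n using Nat.strong_induction_on with
  | _ n ih =>
    match n with
    | 0 => simp [cont]
    | 1 => simp [cont]; decide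
    | n + 2 =>
      have h1 := ih (n+1) (by omega)
      have h2 := ih n (by omega)
      have hfib : (Nat.fib (2*(n+2)+2) : ℤ) = 3 * (Nat.fib (2*(n+1)+2) : ℤ) - (Nat.fib (2*n+2) : ℤ) := by
        have a1 := Nat.fib_add_two (n := 2*n+4)
        have a2 := Nat.fib_add_two (n := 2*n+3)
        have a3 := Nat.fib_add_two (n := 2*n+2)
        have b1 : 2*(n+2)+2 = 2*n+4+2 := by omega
        have b2 : 2*(n+1)+2 = 2*n+4 := by omega
        rw [b1, b2]
        push_cast [a1, a2, a3]
        ring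
      show (-6 : ℤ) * cont (fun _ => -6) (n+1) - 4 * cont (fun _ => -6) n = _
      rw [h1, h2, hfib]
      ring

def dd : ℕ → ℤ := fun i => if i < 2 then 2 else -6

lemma cont_dd : ∀ n : ℕ, 2 ≤ n → cont dd n = (-2)^n * (Nat.fib (2*n-4) : ℤ) := by
  have hshift1 : (fun i => dd (i+1)) = (fun i => if i = 0 then (2:ℤ) else -6) := by
    funext i; simp only [dd]; split_ifs <;> omega
  have hshift2 : (fun i => dd (i+2)) = (fun _ => (-6:ℤ)) := by
    funext i; simp only [dd]; rw [if_neg (by omega)]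
  have hd' : ∀ m : ℕ, cont (fun i => if i = 0 then (2:ℤ) else -6) (m+2)
      = 2 * cont (fun _ => (-6:ℤ)) (m+1) - 4 * cont (fun _ => (-6:ℤ)) m := by
    intro m
    show (if (0:ℕ) = 0 then (2:ℤ) else -6) * cont _ _ - 4 * cont _ _ = _
    rw [if_pos rfl]
    congr 1
  intro n hn
  match n, hn with
  | 2, _ =>
    show dd 0 * cont (fun i => dd (i+1)) 1 - 4 * cont (fun i => dd (i+2)) 0 = _
    rw [hshift1, hshift2]
    simp [cont, dd]
  | (m+3), _ =>
    show dd 0 * cont (fun i => dd (i+1)) (m+2) - 4 * cont (fun i => dd (i+2)) (m+1) = _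
    rw [hshift1, hshift2, hd' m]; simp only [cont_const]
    have : 2*(m+3)-4 = 2*m+2 := by omega
    rw [this, show dd 0 = 2 from rfl]
    ring

def Xs {n : ℕ} (X : Fin n → ℤ) (m : ℕ) : ℤ := if h : m < n then X ⟨m, h⟩ else 0

def Pm (n : ℕ) : Matrix (Fin n) (Fin n) ℤ :=
  Matrix.of fun j a =>
    (if (a : ℕ) = (j : ℕ) then 1 else 0) +
    (if 2 ≤ (j : ℕ) then
      (if (a : ℕ) = (j : ℕ) - 1 then -2 else 0) + (if (a : ℕ) = (j : ℕ) - 2 then 2 else 0)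
     else 0)

lemma sum_delta {n : ℕ} (m : ℕ) (c : ℤ) (X : Fin n → ℤ) :
    (∑ a : Fin n, (if (a : ℕ) = m then c else 0) * X a) =
      if h : m < n then c * X ⟨m, h⟩ else 0 := by
  split_ifs with h
  · rw [Finset.sum_eq_single (⟨m, h⟩ : Fin n)]
    · simp
    · intro a _ ha
      rw [if_neg (by simpa [Fin.ext_iff] using ha), zero_mul]
    · simp
  · apply Finset.sum_eq_zero
    intro a _
    rw [if_neg (by have := a.isLt; omega), zero_mul]

lemma rowsum {n : ℕ} (j : Fin n) (X : Fin n → ℤ) :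
    (∑ a : Fin n, Pm n j a * X a) =
      if 2 ≤ (j : ℕ) then
        Xs X (j : ℕ) - 2 * Xs X ((j : ℕ) - 1) + 2 * Xs X ((j : ℕ) - 2)
      else Xs X (j : ℕ) := by
  have hXj : Xs X (j : ℕ) = (if h : (j:ℕ) < n then X ⟨j, h⟩ else 0) := rfl
  by_cases h2 : 2 ≤ (j : ℕ)
  · simp only [Pm, Matrix.of_apply, if_pos h2, add_mul]
    rw [Finset.sum_add_distrib, Finset.sum_add_distrib, sum_delta, sum_delta, sum_delta]
    simp only [Xs, dif_pos j.isLt, dif_pos (by omega : (j:ℕ) - 1 < n),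
      dif_pos (by omega : (j:ℕ) - 2 < n), Fin.eta]
    ring
  · simp only [Pm, Matrix.of_apply, if_neg h2, add_zero]
    rw [sum_delta]
    simp only [Xs, dif_pos j.isLt, Fin.eta, one_mul]

open Matrix
section glue

variable {n : ℕ}

def Mm (n : ℕ) : Matrix (Fin n) (Fin n) ℤ :=
  Matrix.of fun j k : Fin n => lucasV (2 : ℤ) 2 ((j : ℤ) - (k : ℤ)).natAbs

lemma hXsM (b : Fin n) (m : ℕ) (h : m < n) : Xs (fun a => Mm n a b) m = e m (b : ℕ) := by
  simp only [Xs, dif_pos h]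
  rfl

lemma hPM (j b : Fin n) : (Pm n * Mm n) j b = r (j : ℕ) (b : ℕ) := by
  rw [Matrix.mul_apply, rowsum j (fun a => Mm n a b)]
  unfold r
  split_ifs with h
  · rw [hXsM b _ j.isLt, hXsM b _ (by omega : (j:ℕ) - 1 < n),
      hXsM b _ (by omega : (j:ℕ) - 2 < n)]
  · rw [hXsM b _ j.isLt]

lemma entryPMP (j k : Fin n) : (Pm n * Mm n * (Pm n)ᵀ) j k = G (j : ℕ) (k : ℕ) := by
  rw [Matrix.mul_apply]
  simp only [Matrix.transpose_apply, hPM]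
  have hc : ∀ b : Fin n, r (j:ℕ) (b:ℕ) * Pm n k b = Pm n k b * r (j:ℕ) (b:ℕ) :=
    fun b => mul_comm _ _
  rw [Finset.sum_congr rfl (fun b _ => hc b), rowsum k (fun b => r (j : ℕ) (b : ℕ))]
  have hXr : ∀ (m : ℕ) (h : m < n), Xs (fun b : Fin n => r (j : ℕ) (b : ℕ)) m = r (j:ℕ) m := by
    intro m h
    simp only [Xs, dif_pos h]
  unfold G
  split_ifs with h
  · rw [hXr _ k.isLt, hXr _ (by omega : (k:ℕ) - 1 < n), hXr _ (by omega : (k:ℕ) - 2 < n)]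
  · rw [hXr _ k.isLt]

lemma PMP : Pm n * Mm n * (Pm n)ᵀ = T dd n := by
  ext j k
  rw [entryPMP, ebash]
  rfl

lemma detPm : (Pm n).det = 1 := by
  have htri : (Pm n).BlockTriangular OrderDual.toDual := by
    intro i j hlt
    have hij : i < j := hlt
    have hij' : (i : ℕ) < (j : ℕ) := hij
    simp only [Pm, Matrix.of_apply]
    rw [if_neg (by omega)]
    split_ifs <;> omega
  rw [Matrix.det_of_lowerTriangular (Pm n) htri]
  apply Finset.prod_eq_one
  intro i _
  simp only [Pm, Matrix.of_apply]
  split_ifs <;> omega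

end glue

theorem stmt_10 (n : ℕ) (hn : 2 ≤ n) :
    Matrix.det (Matrix.of fun j k : Fin n =>
        lucasV (2 : ℤ) 2 ((j : ℤ) - (k : ℤ)).natAbs) =
      (-2) ^ n * (Nat.fib (2 * n - 4) : ℤ) := by
  have key : (Mm n).det = cont dd n := by
    have h1 : (Pm n * Mm n * (Pm n)ᵀ).det = (Mm n).det := by
      rw [Matrix.det_mul, Matrix.det_mul, Matrix.det_transpose, detPm, one_mul, mul_one]
    rw [← h1, PMP, detT]
  show (Mm n).det = _
  rw [key, cont_dd n hn]
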